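/- arXiv:1311.0494 — 13 statements merged into one kernel-verified Lean document; each statement's English description precedes it below -/
import Mathlib

section
/- Let k be a positive integer and let A be the adjacency matrix of a regular tournament of order 2k+1 with valency k. Then the block matrix B = [[A, Aᵀ], [A, Aᵀ]] (i.e., Matrix.fromBlocks A Aᵀ A Aᵀ) is the adjacency matrix of a directed strongly regular graph with parameters (4k+2, 2k, k, k−1, k); that is, B·B = k·I + (k−1)·B + k·(J − I − B) and B·J = J·B = 2k·J. -/
open Matrix Kronecker

/-- The all-ones square matrix over `ℤ` indexed by `α`. -/
def allOnes (α : Type*) : Matrix α α ℤ := Matrix.of fun _ _ => 1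

/-- `B` is the adjacency matrix of a directed strongly regular graph
with parameters `(n, k, t, l, m)`. -/
def IsAdjDSRG {α : Type*} [Fintype α] [DecidableEq α]
    (B : Matrix α α ℤ) (n k t l m : ℤ) : Prop :=
  (Fintype.card α : ℤ) = n ∧
  (∀ i j, B i j = 0 ∨ B i j = 1) ∧
  (∀ i, B i i = 0) ∧
  B * B = t • (1 : Matrix α α ℤ) + l • B + m • (allOnes α - 1 - B) ∧
  B * allOnes α = k • allOnes α ∧
  allOnes α * B = k • allOnes α

/-- `A` is the adjacency matrix of a regular tournament of order `n` with valency `k`. -/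
def IsRegularTournament {n : ℕ} (k : ℕ) (A : Matrix (Fin n) (Fin n) ℤ) : Prop :=
  (∀ i j, A i j = 0 ∨ A i j = 1) ∧
  (∀ i, A i i = 0) ∧
  A + Aᵀ = allOnes (Fin n) - 1 ∧
  A * allOnes (Fin n) = (k : ℤ) • allOnes (Fin n) ∧
  allOnes (Fin n) * A = (k : ℤ) • allOnes (Fin n)

/-- The block matrix `M(X) = [[X, Xᵀ + I], [X + I, Xᵀ]]`. -/
def MBlock {α : Type*} [DecidableEq α] (X : Matrix α α ℤ) :
    Matrix (α ⊕ α) (α ⊕ α) ℤ :=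
  Matrix.fromBlocks X (Xᵀ + 1) (X + 1) Xᵀ

/-- Lemma 2(1): the block matrix `[[A, Aᵀ], [A, Aᵀ]]` built from a regular
tournament of order `2k+1` is the adjacency matrix of a
DSRG `(4k+2, 2k, k, k-1, k)`. -/
theorem stmt0 (k : ℕ) (hk : 0 < k)
    (A : Matrix (Fin (2 * k + 1)) (Fin (2 * k + 1)) ℤ)
    (hA : IsRegularTournament k A) :
    IsAdjDSRG (Matrix.fromBlocks A Aᵀ A Aᵀ)
      (4 * (k : ℤ) + 2) (2 * (k : ℤ)) (k : ℤ) ((k : ℤ) - 1) (k : ℤ) := by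
  obtain ⟨h01, hdiag, hsum, hAJ, hJA⟩ := hA
  set J : Matrix (Fin (2 * k + 1)) (Fin (2 * k + 1)) ℤ := allOnes (Fin (2 * k + 1)) with hJ
  have hJT : Jᵀ = J := by ext i j; rfl
  have hATJ : Aᵀ * J = (k : ℤ) • J := by
    have h := congrArg Matrix.transpose hJA
    rwa [Matrix.transpose_mul, Matrix.transpose_smul, hJT] at h
  have hJAT : J * Aᵀ = (k : ℤ) • J := by
    have h := congrArg Matrix.transpose hAJ
    rwa [Matrix.transpose_mul, Matrix.transpose_smul, hJT] at h
  have h1 : A * A + Aᵀ * A = (k : ℤ) • J - A := by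
    have h := congrArg (· * A) hsum
    simp only [add_mul, sub_mul, one_mul, hJA] at h
    exact h
  have h2 : A * Aᵀ + Aᵀ * Aᵀ = (k : ℤ) • J - Aᵀ := by
    have h := congrArg (· * Aᵀ) hsum
    simp only [add_mul, sub_mul, one_mul, hJAT] at h
    exact h
  have hJb : allOnes (Fin (2 * k + 1) ⊕ Fin (2 * k + 1)) = Matrix.fromBlocks J J J J := by
    ext (i | i) (j | j) <;> rfl
  refine ⟨?_, ?_, ?_, ?_, ?_, ?_⟩
  · simp only [Fintype.card_sum, Fintype.card_fin]
    push_cast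
    ring
  · rintro (i | i) (j | j) <;>
      simp only [Matrix.fromBlocks_apply₁₁, Matrix.fromBlocks_apply₁₂,
        Matrix.fromBlocks_apply₂₁, Matrix.fromBlocks_apply₂₂, Matrix.transpose_apply] <;>
      exact h01 _ _
  · rintro (i | i) <;>
      simp only [Matrix.fromBlocks_apply₁₁, Matrix.fromBlocks_apply₂₂,
        Matrix.transpose_apply] <;> exact hdiag i
  · have hrhs : (k : ℤ) • (1 : Matrix (Fin (2 * k + 1) ⊕ Fin (2 * k + 1))
        (Fin (2 * k + 1) ⊕ Fin (2 * k + 1)) ℤ) +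
        ((k : ℤ) - 1) • Matrix.fromBlocks A Aᵀ A Aᵀ +
        (k : ℤ) • (allOnes (Fin (2 * k + 1) ⊕ Fin (2 * k + 1)) - 1 -
          Matrix.fromBlocks A Aᵀ A Aᵀ) =
        (k : ℤ) • allOnes (Fin (2 * k + 1) ⊕ Fin (2 * k + 1)) -
          Matrix.fromBlocks A Aᵀ A Aᵀ := by
      rw [smul_sub, smul_sub, sub_smul, one_smul]
      abel
    rw [hrhs, Matrix.fromBlocks_multiply, hJb, Matrix.fromBlocks_smul, h1, h2]
    simp only [sub_eq_add_neg, Matrix.fromBlocks_neg, Matrix.fromBlocks_add]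
  · rw [hJb, Matrix.fromBlocks_multiply, Matrix.fromBlocks_smul, hAJ, hATJ,
      ← add_smul]
    norm_num [two_mul]
  · rw [hJb, Matrix.fromBlocks_multiply, Matrix.fromBlocks_smul, hJA, hJAT,
      ← add_smul]
    norm_num [two_mul]
end

section
/- Let k be a positive integer and let A be the adjacency matrix of a regular tournament of order 2k+1 with valency k. Then the block matrix C = [[A, A], [Aᵀ, Aᵀ]] (i.e., Matrix.fromBlocks A A Aᵀ Aᵀ) is the adjacency matrix of a directed strongly regular graph with parameters (4k+2, 2k, k, k−1, k); that is, C·C = k·I + (k−1)·C + k·(J − I − C) and C·J = J·C = 2k·J. -/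
open Matrix Kronecker

/-- Lemma 2(2): the block matrix `[[A, A], [Aᵀ, Aᵀ]]` built from a regular
tournament of order `2k+1` is the adjacency matrix of a
DSRG `(4k+2, 2k, k, k-1, k)`. -/
theorem stmt1 (k : ℕ) (hk : 0 < k)
    (A : Matrix (Fin (2 * k + 1)) (Fin (2 * k + 1)) ℤ)
    (hA : IsRegularTournament k A) :
    IsAdjDSRG (Matrix.fromBlocks A A Aᵀ Aᵀ)
      (4 * (k : ℤ) + 2) (2 * (k : ℤ)) (k : ℤ) ((k : ℤ) - 1) (k : ℤ) := by
  obtain ⟨h01, hdiag, hsum, hAJ, hJA⟩ := hA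
  set J : Matrix (Fin (2 * k + 1)) (Fin (2 * k + 1)) ℤ := allOnes (Fin (2 * k + 1)) with hJdef
  have hJt : Jᵀ = J := by ext i j; rfl
  have hAtJ : Aᵀ * J = (k : ℤ) • J := by
    have h := congrArg Matrix.transpose hJA
    rw [Matrix.transpose_mul, Matrix.transpose_smul, hJt] at h
    exact h
  have hJAt : J * Aᵀ = (k : ℤ) • J := by
    have h := congrArg Matrix.transpose hAJ
    rw [Matrix.transpose_mul, Matrix.transpose_smul, hJt] at h
    exact h
  have hsum' : Aᵀ + Aᵀᵀ = J - 1 := by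
    rw [Matrix.transpose_transpose, add_comm Aᵀ A]; exact hsum
  have key : ∀ X : Matrix (Fin (2 * k + 1)) (Fin (2 * k + 1)) ℤ, X * J = (k : ℤ) • J →
      X + Xᵀ = J - 1 → X * X + X * Xᵀ = (k : ℤ) • J - X := by
    intro X hXJ hX
    calc X * X + X * Xᵀ = X * (X + Xᵀ) := by rw [mul_add]
      _ = X * (J - 1) := by rw [hX]
      _ = (k : ℤ) • J - X := by rw [mul_sub, mul_one, hXJ]
  have e1 := key A hAJ hsum
  have e2 := key Aᵀ hAtJ hsum'
  rw [Matrix.transpose_transpose] at e2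
  have hJbig : allOnes (Fin (2 * k + 1) ⊕ Fin (2 * k + 1)) = Matrix.fromBlocks J J J J := by
    ext i j; cases i <;> cases j <;> rfl
  refine ⟨?_, ?_, ?_, ?_, ?_, ?_⟩
  · simp only [Fintype.card_sum, Fintype.card_fin]
    push_cast; ring
  · rintro (i | i) (j | j)
    · exact h01 i j
    · exact h01 i j
    · exact h01 j i
    · exact h01 j i
  · rintro (i | i)
    · exact hdiag i
    · exact hdiag i
  · rw [hJbig, show (1 : Matrix (Fin (2 * k + 1) ⊕ Fin (2 * k + 1)) (Fin (2 * k + 1) ⊕ Fin (2 * k + 1)) ℤ) =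
      Matrix.fromBlocks 1 0 0 1 from (Matrix.fromBlocks_one).symm]
    rw [Matrix.fromBlocks_multiply]
    simp only [Matrix.fromBlocks_smul, Matrix.fromBlocks_add, sub_eq_add_neg,
      Matrix.fromBlocks_neg]
    rw [Matrix.fromBlocks_inj]
    refine ⟨?_, ?_, ?_, ?_⟩
    · rw [e1]; module
    · rw [e1]; module
    · rw [show Aᵀ * A + Aᵀ * Aᵀ = Aᵀ * Aᵀ + Aᵀ * A from add_comm _ _, e2]; module
    · rw [show Aᵀ * A + Aᵀ * Aᵀ = Aᵀ * Aᵀ + Aᵀ * A from add_comm _ _, e2]; module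
  · rw [hJbig, Matrix.fromBlocks_multiply]
    simp only [Matrix.fromBlocks_smul]
    rw [hAJ, hAtJ, Matrix.fromBlocks_inj]
    refine ⟨?_, ?_, ?_, ?_⟩ <;> module
  · rw [hJbig, Matrix.fromBlocks_multiply]
    simp only [Matrix.fromBlocks_smul]
    rw [hJA, hJAt, Matrix.fromBlocks_inj]
    refine ⟨?_, ?_, ?_, ?_⟩ <;> module
end

section
/- Let k be a positive integer and let A be the adjacency matrix of a regular tournament of order 2k+1 with valency k. Then M(A) = [[A, Aᵀ + I], [A + I, Aᵀ]] is the adjacency matrix of a directed strongly regular graph with parameters (4k+2, 2k+1, k+1, k, k+1); that is, M(A)·M(A) = (k+1)·I + k·M(A) + (k+1)·(J − I − M(A)) and M(A)·J = J·M(A) = (2k+1)·J. -/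
open Matrix Kronecker

/-- Lemma 3: `M(A) = [[A, Aᵀ + I], [A + I, Aᵀ]]` built from a regular
tournament of order `2k+1` is the adjacency matrix of a
DSRG `(4k+2, 2k+1, k+1, k, k+1)`. -/
theorem stmt2 (k : ℕ) (hk : 0 < k)
    (A : Matrix (Fin (2 * k + 1)) (Fin (2 * k + 1)) ℤ)
    (hA : IsRegularTournament k A) :
    IsAdjDSRG (MBlock A)
      (4 * (k : ℤ) + 2) (2 * (k : ℤ) + 1) ((k : ℤ) + 1) (k : ℤ) ((k : ℤ) + 1) := by
  obtain ⟨h01, hdiag, hsum, hAJ, hJA⟩ := hA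
  set J : Matrix (Fin (2 * k + 1)) (Fin (2 * k + 1)) ℤ := allOnes (Fin (2 * k + 1)) with hJdef
  have hT : Aᵀ = J - 1 - A := by
    have : A + Aᵀ = J - 1 := hsum
    rw [← this]
    abel
  have hJJ : J * J = ((2 * (k : ℤ) + 1)) • J := by
    ext i j
    simp [hJdef, allOnes, Matrix.mul_apply, Finset.sum_const]
  have hTJ : Aᵀ * J = (k : ℤ) • J := by
    rw [hT]
    simp only [sub_mul, one_mul, hAJ, hJJ]
    module
  have hJT : J * Aᵀ = (k : ℤ) • J := by
    rw [hT]
    simp only [mul_sub, mul_one, hJA, hJJ]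
    module
  have hO : allOnes (Fin (2 * k + 1) ⊕ Fin (2 * k + 1)) = Matrix.fromBlocks J J J J := by
    ext i j
    rcases i with i | i <;> rcases j with j | j <;> rfl
  have e1 : A * A + (Aᵀ + 1) * (A + 1) = ((k : ℤ) + 1) • J - A := by
    rw [hT]
    simp only [sub_mul, add_mul, mul_add, mul_sub, one_mul, mul_one, hAJ, hJA, hJJ]
    module
  have e2 : A * (Aᵀ + 1) + (Aᵀ + 1) * Aᵀ = ((k : ℤ) + 1) • J - (Aᵀ + 1) := by
    rw [hT]
    simp only [sub_mul, add_mul, mul_add, mul_sub, one_mul, mul_one, hAJ, hJA, hJJ]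
    module
  have e3 : (A + 1) * A + Aᵀ * (A + 1) = ((k : ℤ) + 1) • J - (A + 1) := by
    rw [hT]
    simp only [sub_mul, add_mul, mul_add, mul_sub, one_mul, mul_one, hAJ, hJA, hJJ]
    module
  have e4 : (A + 1) * (Aᵀ + 1) + Aᵀ * Aᵀ = ((k : ℤ) + 1) • J - Aᵀ := by
    rw [hT]
    simp only [sub_mul, add_mul, mul_add, mul_sub, one_mul, mul_one, hAJ, hJA, hJJ]
    module
  have key : MBlock A * MBlock A
      = ((k : ℤ) + 1) • allOnes (Fin (2 * k + 1) ⊕ Fin (2 * k + 1)) - MBlock A := by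
    rw [MBlock, hO, Matrix.fromBlocks_multiply, Matrix.fromBlocks_smul,
      sub_eq_add_neg, Matrix.fromBlocks_neg, Matrix.fromBlocks_add,
      e1, e2, e3, e4]
    congr 1 <;> abel
  refine ⟨?_, ?_, ?_, ?_, ?_, ?_⟩
  · simp
    push_cast
    ring
  · rintro (i | i) (j | j)
    · exact h01 i j
    · by_cases h : i = j
      · subst h
        right
        simp [MBlock, Matrix.one_apply, hdiag]
      · rcases h01 j i with h' | h' <;> [left; right] <;>
          simp [MBlock, Matrix.one_apply, h, h']
    · by_cases h : i = j
      · subst h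
        right
        simp [MBlock, Matrix.one_apply, hdiag]
      · rcases h01 i j with h' | h' <;> [left; right] <;>
          simp [MBlock, Matrix.one_apply, h, h']
    · exact h01 j i
  · rintro (i | i)
    · exact hdiag i
    · exact hdiag i
  · rw [key]
    module
  · have f1 : A * J + (Aᵀ + 1) * J = (2 * (k : ℤ) + 1) • J := by
      simp only [add_mul, one_mul, hAJ, hTJ]
      module
    have f2 : (A + 1) * J + Aᵀ * J = (2 * (k : ℤ) + 1) • J := by
      simp only [add_mul, one_mul, hAJ, hTJ]
      module
    rw [MBlock, hO, Matrix.fromBlocks_multiply, Matrix.fromBlocks_smul, f1, f2]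
  · have f1 : J * A + J * (A + 1) = (2 * (k : ℤ) + 1) • J := by
      simp only [mul_add, mul_one, hJA]
      module
    have f2 : J * (Aᵀ + 1) + J * Aᵀ = (2 * (k : ℤ) + 1) • J := by
      simp only [mul_add, mul_one, hJT]
      module
    rw [MBlock, hO, Matrix.fromBlocks_multiply, Matrix.fromBlocks_smul, f1, f2]
end

section
/- Let A be the adjacency matrix of a directed strongly regular graph DSRG(n, k, t, λ, μ). Then its complement A' = J − I − A is the adjacency matrix of a directed strongly regular graph DSRG(n, k', t', λ', μ') with k' = (n − 2k) + (k − 1), t' = (n − 2k) + (t − 1), λ' = (n − 2k) + (μ − 2), and μ' = (n − 2k) + λ; that is, A'·A' = t'·I + λ'·A' + μ'·(J − I − A') and A'·J = J·A' = k'·J. -/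
open Matrix Kronecker

/-- The complement `J - I - A` of the adjacency matrix of a DSRG`(n,k,t,λ,μ)`
is the adjacency matrix of a DSRG with parameters
`(n, (n-2k)+(k-1), (n-2k)+(t-1), (n-2k)+(μ-2), (n-2k)+λ)`. -/
theorem stmt4 (n : ℕ) (k t l m : ℤ)
    (A : Matrix (Fin n) (Fin n) ℤ)
    (hA : IsAdjDSRG A n k t l m) :
    IsAdjDSRG (allOnes (Fin n) - 1 - A) (n : ℤ)
      (((n : ℤ) - 2 * k) + (k - 1))
      (((n : ℤ) - 2 * k) + (t - 1))
      (((n : ℤ) - 2 * k) + (m - 2))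
      (((n : ℤ) - 2 * k) + l) := by
  obtain ⟨hcard, h01, hdiag, hAA, hAJ, hJA⟩ := hA
  have hJJ : allOnes (Fin n) * allOnes (Fin n) = (n : ℤ) • allOnes (Fin n) := by
    ext i j
    simp [allOnes, Matrix.mul_apply]
  refine ⟨hcard, ?_, ?_, ?_, ?_, ?_⟩
  · intro i j
    by_cases h : i = j
    · subst h
      left
      simp [allOnes, hdiag i, Matrix.one_apply]
    · rcases h01 i j with h0 | h1
      · right; simp [allOnes, h0, Matrix.one_apply_ne h]
      · left; simp [allOnes, h1, Matrix.one_apply_ne h]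
  · intro i
    simp [allOnes, hdiag i, Matrix.one_apply]
  · simp only [sub_mul, mul_sub, one_mul, mul_one, hJJ, hAJ, hJA, hAA, ← hcard]
    module
  · simp only [sub_mul, one_mul, hJJ, hJA, hAJ, ← hcard]
    module
  · simp only [mul_sub, mul_one, hJJ, hJA, hAJ, ← hcard]
    module
end

section
/- Let k and w be positive integers and let A be the adjacency matrix of a regular tournament of order 2k+1 with valency k. Let B₂ = [[A, Aᵀ], [A, Aᵀ]] and let B = J_w ⊗ B₂ be the Kronecker product of the w×w all-ones matrix with B₂ (equivalently, the block matrix of order (4k+2)w in which every block row consists of w alternating copies of A and Aᵀ). Then B is the adjacency matrix of a directed strongly regular graph with parameters ((4k+2)w, 2kw, kw, (k−1)w, kw). -/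
open Matrix Kronecker

lemma allOnes_transpose (α : Type*) : (allOnes α)ᵀ = allOnes α := rfl

lemma allOnes_mul_allOnes (α : Type*) [Fintype α] [DecidableEq α] :
    allOnes α * allOnes α = (Fintype.card α : ℤ) • allOnes α := by
  ext i j
  simp [allOnes, Matrix.mul_apply]

lemma allOnes_sum (α : Type*) :
    allOnes (α ⊕ α) = Matrix.fromBlocks (allOnes α) (allOnes α) (allOnes α) (allOnes α) := by
  ext i j
  cases i <;> cases j <;> rfl

lemma fromBlocks_sub' {α : Type*} (a b c d a' b' c' d' : Matrix α α ℤ) :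
    Matrix.fromBlocks a b c d - Matrix.fromBlocks a' b' c' d' =
      Matrix.fromBlocks (a - a') (b - b') (c - c') (d - d') := by
  ext i j
  cases i <;> cases j <;> simp

lemma kron_sub {l n : Type*} (X : Matrix l l ℤ) (Y Z : Matrix n n ℤ) :
    X ⊗ₖ (Y - Z) = X ⊗ₖ Y - X ⊗ₖ Z := by
  ext i j
  simp [Matrix.kroneckerMap, mul_sub]

lemma allOnes_prod_kron (β γ : Type*) :
    allOnes (β × γ) = allOnes β ⊗ₖ allOnes γ := by
  ext i j
  simp [allOnes, Matrix.kroneckerMap]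


/-- Lemma 4(1): `J_w ⊗ [[A, Aᵀ], [A, Aᵀ]]` built from a regular tournament of
order `2k+1` is the adjacency matrix of a DSRG `((4k+2)w, 2kw, kw, (k-1)w, kw)`. -/
theorem stmt5 (k w : ℕ) (hk : 0 < k) (hw : 0 < w)
    (A : Matrix (Fin (2 * k + 1)) (Fin (2 * k + 1)) ℤ)
    (hA : IsRegularTournament k A) :
    IsAdjDSRG (allOnes (Fin w) ⊗ₖ Matrix.fromBlocks A Aᵀ A Aᵀ)
      ((4 * (k : ℤ) + 2) * w) (2 * (k : ℤ) * w) ((k : ℤ) * w)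
      (((k : ℤ) - 1) * w) ((k : ℤ) * w) := by
  obtain ⟨h01, hdiag, hsum, hAJ, hJA⟩ := hA
  set J : Matrix (Fin (2 * k + 1)) (Fin (2 * k + 1)) ℤ := allOnes (Fin (2 * k + 1)) with hJ
  have hAtJ : Aᵀ * J = (k : ℤ) • J := by
    have h := congrArg Matrix.transpose hJA
    rw [Matrix.transpose_mul, Matrix.transpose_smul] at h
    exact h
  have hJAt : J * Aᵀ = (k : ℤ) • J := by
    have h := congrArg Matrix.transpose hAJ
    rw [Matrix.transpose_mul, Matrix.transpose_smul] at h
    exact h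
  have hAA : A * A + Aᵀ * A = (k : ℤ) • J - A := by
    have h : (A + Aᵀ) * A = (J - 1) * A := by rw [hsum]
    rw [add_mul, sub_mul, one_mul, hJA] at h
    linear_combination (norm := module) h
  have hAAt : A * Aᵀ + Aᵀ * Aᵀ = (k : ℤ) • J - Aᵀ := by
    have h : (A + Aᵀ) * Aᵀ = (J - 1) * Aᵀ := by rw [hsum]
    rw [add_mul, sub_mul, one_mul, hJAt] at h
    linear_combination (norm := module) h
  set B₂ : Matrix (Fin (2 * k + 1) ⊕ Fin (2 * k + 1)) (Fin (2 * k + 1) ⊕ Fin (2 * k + 1)) ℤ :=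
    Matrix.fromBlocks A Aᵀ A Aᵀ with hB₂
  have h2a : A * J + Aᵀ * J = (2 * (k : ℤ)) • J := by
    rw [hAJ, hAtJ]; module
  have h2c : J * A + J * A = (2 * (k : ℤ)) • J := by
    rw [hJA]; module
  have h2d : J * Aᵀ + J * Aᵀ = (2 * (k : ℤ)) • J := by
    rw [hJAt]; module
  have hB2sq : B₂ * B₂ = (k : ℤ) • allOnes _ - B₂ := by
    rw [hB₂, Matrix.fromBlocks_multiply, allOnes_sum,
      Matrix.fromBlocks_smul, fromBlocks_sub', hAA, hAAt]
  have hB2J : B₂ * allOnes _ = (2 * (k : ℤ)) • allOnes (Fin (2*k+1) ⊕ Fin (2*k+1)) := by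
    rw [hB₂, allOnes_sum, Matrix.fromBlocks_multiply, Matrix.fromBlocks_smul, h2a]
  have hJB2 : allOnes _ * B₂ = (2 * (k : ℤ)) • allOnes (Fin (2*k+1) ⊕ Fin (2*k+1)) := by
    rw [hB₂, allOnes_sum, Matrix.fromBlocks_multiply, Matrix.fromBlocks_smul, h2c, h2d]
  have hJJw : allOnes (Fin w) * allOnes (Fin w) = (w : ℤ) • allOnes (Fin w) := by
    simpa using allOnes_mul_allOnes (Fin w)
  refine ⟨?_, ?_, ?_, ?_, ?_, ?_⟩
  · simp only [Fintype.card_prod, Fintype.card_sum, Fintype.card_fin]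
    push_cast; ring
  · rintro ⟨i, x⟩ ⟨j, y⟩
    simp only [Matrix.kroneckerMap_apply, allOnes, Matrix.of_apply, one_mul]
    cases x <;> cases y <;> first
      | exact h01 _ _
      | · rename_i a b
          rcases h01 b a with h | h <;> simp [Matrix.transpose_apply, h]
  · rintro ⟨i, x⟩
    cases x <;> simp [hB₂, allOnes, Matrix.kroneckerMap_apply, hdiag]
  · show (allOnes (Fin w) ⊗ₖ B₂) * (allOnes (Fin w) ⊗ₖ B₂) = _
    rw [← Matrix.mul_kronecker_mul, hJJw, hB2sq, Matrix.smul_kronecker,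
      kron_sub, Matrix.kronecker_smul, ← allOnes_prod_kron]
    module
  · show (allOnes (Fin w) ⊗ₖ B₂) * _ = _
    rw [allOnes_prod_kron, ← Matrix.mul_kronecker_mul, hJJw, hB2J,
      Matrix.smul_kronecker, Matrix.kronecker_smul, ← allOnes_prod_kron]
    module
  · show _ * (allOnes (Fin w) ⊗ₖ B₂) = _
    rw [allOnes_prod_kron, ← Matrix.mul_kronecker_mul, hJJw, hJB2,
      Matrix.smul_kronecker, Matrix.kronecker_smul, ← allOnes_prod_kron]
    module
end

section
/- Let k and w be positive integers and let A be the adjacency matrix of a regular tournament of order 2k+1 with valency k. Let C be the block matrix of order (4k+2)w consisting of 2w × 2w blocks of size (2k+1)×(2k+1), in which the (i,j) block equals A when the block-row index i is odd and equals Aᵀ when i is even (so the block rows alternate between rows of all A's and rows of all Aᵀ's). Then C is the adjacency matrix of a directed strongly regular graph with parameters ((4k+2)w, 2kw, kw, (k−1)w, kw). -/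
open Matrix Kronecker

lemma sum_range_even_odd (w : ℕ) (a b : ℤ) :
    ∑ i ∈ Finset.range (2*w), (if i % 2 = 0 then a else b) = w*a + w*b := by
  induction w with
  | zero => simp
  | succ n ih =>
    have h1 : (2*n) % 2 = 0 := by omega
    have h2 : (2*n+1) % 2 = 1 := by omega
    rw [show 2*(n+1) = 2*n+1+1 by ring, Finset.sum_range_succ, Finset.sum_range_succ, ih, h1, h2]
    simp only [if_pos rfl, Nat.one_ne_zero, if_false]
    push_cast; ring

lemma sum_even_odd (w : ℕ) (a b : ℤ) :
    ∑ s : Fin (2*w), (if (s : ℕ) % 2 = 0 then a else b) = w*a + w*b := by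
  rw [Fin.sum_univ_eq_sum_range (fun i => if i % 2 = 0 then a else b) (2*w)]
  exact sum_range_even_odd w a b

/-- Lemma 4(2): the block matrix of order `(4k+2)w` whose block rows alternate
between rows of `A`'s and rows of `Aᵀ`'s (block `(i,j)` is `A` when the 1-based
block-row index `i` is odd, i.e. the 0-based index is even, and `Aᵀ` otherwise),
built from a regular tournament of order `2k+1`, is the adjacency matrix of a
DSRG `((4k+2)w, 2kw, kw, (k-1)w, kw)`. -/
theorem stmt6 (k w : ℕ) (hk : 0 < k) (hw : 0 < w)
    (A : Matrix (Fin (2 * k + 1)) (Fin (2 * k + 1)) ℤ)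
    (hA : IsRegularTournament k A) :
    let C : Matrix (Fin (2 * w) × Fin (2 * k + 1)) (Fin (2 * w) × Fin (2 * k + 1)) ℤ :=
      Matrix.of fun p q => if (p.1 : ℕ) % 2 = 0 then A p.2 q.2 else Aᵀ p.2 q.2
    IsAdjDSRG C
      ((4 * (k : ℤ) + 2) * w) (2 * (k : ℤ) * w) ((k : ℤ) * w)
      (((k : ℤ) - 1) * w) ((k : ℤ) * w) := by
  obtain ⟨h01, hdiag, hAT, hrow, hcol⟩ := hA
  intro C
  have hrow' : ∀ i, ∑ j, A i j = (k : ℤ) := by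
    intro i
    have := congrFun (congrFun hrow i) i
    simpa [Matrix.mul_apply, allOnes] using this
  have hcol' : ∀ j, ∑ i, A i j = (k : ℤ) := by
    intro j
    have := congrFun (congrFun hcol j) j
    simpa [Matrix.mul_apply, allOnes] using this
  have hAT' : ∀ i j, A i j + A j i = 1 - (if i = j then (1:ℤ) else 0) := by
    intro i j
    have := congrFun (congrFun hAT i) j
    simpa [allOnes, Matrix.one_apply] using this
  refine ⟨?_, ?_, ?_, ?_, ?_, ?_⟩
  · simp only [Fintype.card_prod, Fintype.card_fin]
    push_cast; ring
  · rintro ⟨s, i⟩ ⟨t, j⟩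
    simp only [C, Matrix.of_apply, Matrix.transpose_apply]
    split
    · exact h01 i j
    · exact h01 j i
  · rintro ⟨s, i⟩
    simp only [C, Matrix.of_apply, Matrix.transpose_apply]
    split <;> exact hdiag i
  · ext p q
    rw [Matrix.mul_apply, Fintype.sum_prod_type]
    simp only [C, Matrix.of_apply, Matrix.transpose_apply, Matrix.add_apply,
      Matrix.smul_apply, Matrix.sub_apply, Matrix.one_apply, allOnes, smul_eq_mul]
    rw [Finset.sum_comm]
    by_cases hp : (p.1 : ℕ) % 2 = 0
    · simp only [if_pos hp]
      have key : ∀ j, ∑ s : Fin (2*w), A p.2 j * (if (s : ℕ) % 2 = 0 then A j q.2 else A q.2 j)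
          = (w : ℤ) * A p.2 j - (if j = q.2 then (w : ℤ) * A p.2 j else 0) := by
        intro j
        rw [← Finset.mul_sum, sum_even_odd]
        by_cases hj : j = q.2
        · subst hj; simp [hdiag]
        · have h := hAT' j q.2
          rw [if_neg hj] at h
          rw [if_neg hj]
          linear_combination (w : ℤ) * A p.2 j * h
      rw [Finset.sum_congr rfl (fun j _ => key j), Finset.sum_sub_distrib,
        ← Finset.mul_sum, hrow',
        Finset.sum_ite_eq' Finset.univ q.2 (fun x => (w : ℤ) * A p.2 x)]
      simp only [Finset.mem_univ, if_true]
      ring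
    · simp only [if_neg hp]
      have key : ∀ j, ∑ s : Fin (2*w), A j p.2 * (if (s : ℕ) % 2 = 0 then A j q.2 else A q.2 j)
          = (w : ℤ) * A j p.2 - (if j = q.2 then (w : ℤ) * A q.2 p.2 else 0) := by
        intro j
        rw [← Finset.mul_sum, sum_even_odd]
        by_cases hj : j = q.2
        · subst hj; simp [hdiag]
        · have h := hAT' j q.2
          rw [if_neg hj] at h
          rw [if_neg hj]
          linear_combination (w : ℤ) * A j p.2 * h
      rw [Finset.sum_congr rfl (fun j _ => key j), Finset.sum_sub_distrib,
        ← Finset.mul_sum, hcol',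
        Finset.sum_ite_eq' Finset.univ q.2 (fun _ => (w : ℤ) * A q.2 p.2)]
      simp only [Finset.mem_univ, if_true]
      ring
  · ext p q
    rw [Matrix.mul_apply, Fintype.sum_prod_type]
    simp only [C, Matrix.of_apply, Matrix.transpose_apply, allOnes, Matrix.smul_apply,
      smul_eq_mul, mul_one]
    by_cases hp : (p.1 : ℕ) % 2 = 0
    · simp only [if_pos hp]
      rw [Finset.sum_congr rfl (fun s _ => hrow' p.2), Finset.sum_const,
        Finset.card_univ, Fintype.card_fin]
      push_cast; ring
    · simp only [if_neg hp]
      rw [Finset.sum_congr rfl (fun s _ => hcol' p.2), Finset.sum_const,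
        Finset.card_univ, Fintype.card_fin]
      push_cast; ring
  · ext p q
    rw [Matrix.mul_apply, Fintype.sum_prod_type]
    simp only [C, Matrix.of_apply, Matrix.transpose_apply, allOnes, Matrix.smul_apply,
      smul_eq_mul, one_mul]
    have h : ∀ s : Fin (2*w),
        (∑ j, if (s : ℕ) % 2 = 0 then A j q.2 else A q.2 j) = (k : ℤ) := by
      intro s
      by_cases hs : (s : ℕ) % 2 = 0
      · simp only [if_pos hs]; exact hcol' q.2
      · simp only [if_neg hs]; exact hrow' q.2
    rw [Finset.sum_congr rfl (fun s _ => h s), Finset.sum_const,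
      Finset.card_univ, Fintype.card_fin]
    push_cast; ring
end

section
/- Let A be the adjacency matrix of a directed strongly regular graph DSRG(n, k, t, λ, μ) with t = μ, and let m > 1 be an integer. Then the Kronecker product J_m ⊗ A of the m×m all-ones matrix with A is the adjacency matrix of a directed strongly regular graph with parameters (nm, km, tm, λm, μm). -/
open Matrix Kronecker

/-- Duval's Kronecker-product construction: if `A` is the adjacency matrix of a
DSRG`(n,k,t,λ,μ)` with `t = μ` and `m > 1`, then `J_m ⊗ A` is the adjacency
matrix of a DSRG`(nm, km, tm, λm, μm)`. -/
theorem stmt7 (n : ℕ) (k t lam mu : ℤ) (m : ℕ) (hm : 1 < m)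
    (A : Matrix (Fin n) (Fin n) ℤ)
    (hA : IsAdjDSRG A n k t lam mu) (htmu : t = mu) :
    IsAdjDSRG (allOnes (Fin m) ⊗ₖ A)
      ((n : ℤ) * m) (k * m) (t * m) (lam * m) (mu * m) := by
  subst htmu
  obtain ⟨hcard, h01, hdiag, hmul, hrow, hcol⟩ := hA
  have hmul' : ∀ a b, (∑ c, A a c * A c b) =
      t * (if a = b then 1 else 0) + lam * A a b
        + t * (1 - (if a = b then 1 else 0) - A a b) := by
    intro a b
    have := congrFun (congrFun hmul a) b
    rw [Matrix.mul_apply] at this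
    simpa only [Matrix.add_apply, Matrix.sub_apply, Matrix.smul_apply, Matrix.one_apply,
      allOnes, Matrix.of_apply, smul_eq_mul] using this
  have hrow' : ∀ (a _ : Fin n), (∑ c, A a c) = k := by
    intro a b
    have := congrFun (congrFun hrow a) b
    simpa [Matrix.mul_apply, allOnes] using this
  have hcol' : ∀ (_ b : Fin n), (∑ c, A c b) = k := by
    intro a b
    have := congrFun (congrFun hcol a) b
    simpa [Matrix.mul_apply, allOnes] using this
  refine ⟨by simp [Fintype.card_prod, hcard]; push_cast; ring, ?_, ?_, ?_, ?_, ?_⟩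
  · rintro ⟨i, a⟩ ⟨j, b⟩
    simpa [Matrix.kroneckerMap_apply, allOnes] using h01 a b
  · rintro ⟨i, a⟩
    simpa [Matrix.kroneckerMap_apply, allOnes] using hdiag a
  · ext ⟨i, a⟩ ⟨j, b⟩
    have L : ((allOnes (Fin m) ⊗ₖ A) * (allOnes (Fin m) ⊗ₖ A)) (i, a) (j, b)
        = (m : ℤ) * ∑ c, A a c * A c b := by
      rw [Matrix.mul_apply, Fintype.sum_prod_type]
      simp [Matrix.kroneckerMap_apply, allOnes, Finset.card_univ]
    rw [L, hmul' a b]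
    simp only [Matrix.add_apply, Matrix.sub_apply, Matrix.smul_apply, Matrix.one_apply,
      Matrix.kroneckerMap_apply, allOnes, Matrix.of_apply, smul_eq_mul, Prod.mk.injEq]
    rcases eq_or_ne i j with rfl | hij <;> rcases eq_or_ne a b with rfl | hab <;>
      simp_all <;> ring
  · ext ⟨i, a⟩ ⟨j, b⟩
    have L : ((allOnes (Fin m) ⊗ₖ A) * allOnes (Fin m × Fin n)) (i, a) (j, b)
        = (m : ℤ) * ∑ c, A a c := by
      rw [Matrix.mul_apply, Fintype.sum_prod_type]
      simp [Matrix.kroneckerMap_apply, allOnes, Finset.card_univ]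
    rw [L, hrow' a b]
    simp [allOnes]
    ring
  · ext ⟨i, a⟩ ⟨j, b⟩
    have L : (allOnes (Fin m × Fin n) * (allOnes (Fin m) ⊗ₖ A)) (i, a) (j, b)
        = (m : ℤ) * ∑ c, A c b := by
      rw [Matrix.mul_apply, Fintype.sum_prod_type]
      simp [Matrix.kroneckerMap_apply, allOnes, Finset.card_univ]
    rw [L, hcol' a b]
    simp [allOnes]
    ring
end

section
/- Let ℓ be a nonnegative integer, set m = 4ℓ + 4, and let D be a 2m×2m integer matrix all of whose entries are 0 or 1, with zero diagonal, satisfying D·J = J·D = (m−1)·J, D·Dᵀ = Dᵀ·D, D·D = (2ℓ+1)·(D + Dᵀ) + (4ℓ+3)·(J − I − D − Dᵀ), and D·Dᵀ = (4ℓ+3)·I + (2ℓ+1)·(D + Dᵀ) (these conditions hold for the adjacency matrix of the doubly regular (m,2)-team tournament obtained from a doubly regular tournament of order m−1 = 4ℓ+3). Then M(D) is the adjacency matrix of a directed strongly regular graph with parameters (4m, 2m−1, m, m−1, m−1); that is, M(D)·M(D) = m·I + (m−1)·M(D) + (m−1)·(J − I − M(D)) and M(D)·J = J·M(D) = (2m−1)·J.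 -/
open Matrix Kronecker
set_option maxHeartbeats 1000000

/-- Lemma 5: if `D` (of order `2m`, `m = 4ℓ+4`) is the adjacency matrix of a
doubly regular `(m,2)`-team tournament coming from a doubly regular tournament
of order `m-1 = 4ℓ+3`, then `M(D)` is the adjacency matrix of a
DSRG `(4m, 2m-1, m, m-1, m-1)`. -/
theorem stmt8 (l : ℕ)
    (D : Matrix (Fin (2 * (4 * l + 4))) (Fin (2 * (4 * l + 4))) ℤ)
    (h01 : ∀ i j, D i j = 0 ∨ D i j = 1)
    (hdiag : ∀ i, D i i = 0)
    (hDJ : D * allOnes (Fin (2 * (4 * l + 4))) =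
      ((4 * (l : ℤ) + 4) - 1) • allOnes (Fin (2 * (4 * l + 4))))
    (hJD : allOnes (Fin (2 * (4 * l + 4))) * D =
      ((4 * (l : ℤ) + 4) - 1) • allOnes (Fin (2 * (4 * l + 4))))
    (hnormal : D * Dᵀ = Dᵀ * D)
    (hD2 : D * D = (2 * (l : ℤ) + 1) • (D + Dᵀ) +
      (4 * (l : ℤ) + 3) • (allOnes (Fin (2 * (4 * l + 4))) - 1 - D - Dᵀ))
    (hDDT : D * Dᵀ = (4 * (l : ℤ) + 3) • (1 : Matrix (Fin (2 * (4 * l + 4))) (Fin (2 * (4 * l + 4))) ℤ) +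
      (2 * (l : ℤ) + 1) • (D + Dᵀ)) :
    IsAdjDSRG (MBlock D)
      (4 * (4 * (l : ℤ) + 4)) (2 * (4 * (l : ℤ) + 4) - 1) (4 * (l : ℤ) + 4)
      ((4 * (l : ℤ) + 4) - 1) ((4 * (l : ℤ) + 4) - 1) := by
  set J : Matrix (Fin (2 * (4 * l + 4))) (Fin (2 * (4 * l + 4))) ℤ :=
    allOnes (Fin (2 * (4 * l + 4))) with hJdef
  have hJT : Jᵀ = J := allOnes_transpose _
  have hDTJ : Dᵀ * J = ((4 * (l : ℤ) + 4) - 1) • J := by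
    calc Dᵀ * J = Dᵀ * Jᵀ := by rw [hJT]
    _ = (J * D)ᵀ := (Matrix.transpose_mul J D).symm
    _ = _ := by rw [hJD, Matrix.transpose_smul, hJT]
  have hJDT : J * Dᵀ = ((4 * (l : ℤ) + 4) - 1) • J := by
    calc J * Dᵀ = Jᵀ * Dᵀ := by rw [hJT]
    _ = (D * J)ᵀ := (Matrix.transpose_mul D J).symm
    _ = _ := by rw [hDJ, Matrix.transpose_smul, hJT]
  have hDT2 : Dᵀ * Dᵀ = (2 * (l : ℤ) + 1) • (D + Dᵀ) +
      (4 * (l : ℤ) + 3) • (J - 1 - D - Dᵀ) := by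
    have h := congrArg Matrix.transpose hD2
    rw [Matrix.transpose_mul] at h
    rw [h, Matrix.transpose_add, Matrix.transpose_smul, Matrix.transpose_smul,
      Matrix.transpose_sub, Matrix.transpose_sub, Matrix.transpose_sub,
      Matrix.transpose_add, Matrix.transpose_one, Matrix.transpose_transpose, hJT]
    module
  have hDTD : Dᵀ * D = (4 * (l : ℤ) + 3) •
      (1 : Matrix (Fin (2 * (4 * l + 4))) (Fin (2 * (4 * l + 4))) ℤ) +
      (2 * (l : ℤ) + 1) • (D + Dᵀ) := by rw [← hnormal]; exact hDDT
  refine ⟨?_, ?_, ?_, ?_, ?_, ?_⟩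
  · simp only [Fintype.card_sum, Fintype.card_fin]
    push_cast; ring
  · rintro (i|i) (j|j)
    · exact h01 i j
    · simp only [MBlock, Matrix.fromBlocks_apply₁₂, Matrix.add_apply,
        Matrix.transpose_apply, Matrix.one_apply]
      by_cases h : i = j
      · subst h; simp [hdiag]
      · simp only [h, if_neg h]
        rcases h01 j i with h' | h' <;> simp [h']
    · simp only [MBlock, Matrix.fromBlocks_apply₂₁, Matrix.add_apply, Matrix.one_apply]
      by_cases h : i = j
      · subst h; simp [hdiag]
      · simp only [h, if_neg h]
        rcases h01 i j with h' | h' <;> simp [h']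
    · rcases h01 j i with h' | h' <;> simp [MBlock, h']
  · rintro (i|i) <;> simp [MBlock, hdiag]
  · have hR : (4 * (l : ℤ) + 4) •
        (1 : Matrix (Fin (2 * (4 * l + 4)) ⊕ Fin (2 * (4 * l + 4)))
          (Fin (2 * (4 * l + 4)) ⊕ Fin (2 * (4 * l + 4))) ℤ) +
        ((4 * (l : ℤ) + 4) - 1) • MBlock D +
        ((4 * (l : ℤ) + 4) - 1) • (allOnes _ - 1 - MBlock D) =
        1 + (4 * (l : ℤ) + 3) • allOnes _ := by module
    rw [hR, allOnes_sum, MBlock, Matrix.fromBlocks_multiply,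
      ← Matrix.fromBlocks_one, Matrix.fromBlocks_smul, Matrix.fromBlocks_add,
      Matrix.fromBlocks_inj]
    refine ⟨?_, ?_, ?_, ?_⟩
    · simp only [add_mul, mul_add, mul_one, one_mul]
      rw [hD2, hDTD]; module
    · simp only [add_mul, mul_add, mul_one, one_mul]
      rw [hDDT, hDT2]; module
    · simp only [add_mul, mul_add, mul_one, one_mul]
      rw [hD2, hDTD]; module
    · simp only [add_mul, mul_add, mul_one, one_mul]
      rw [hDDT, hDT2]; module
  · rw [allOnes_sum, MBlock, Matrix.fromBlocks_multiply, Matrix.fromBlocks_smul,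
      Matrix.fromBlocks_inj]
    refine ⟨?_, ?_, ?_, ?_⟩ <;>
      · simp only [← hJdef, add_mul, one_mul, hDJ, hDTJ]
        module
  · rw [allOnes_sum, MBlock, Matrix.fromBlocks_multiply, Matrix.fromBlocks_smul,
      Matrix.fromBlocks_inj]
    refine ⟨?_, ?_, ?_, ?_⟩ <;>
      · simp only [← hJdef, mul_add, mul_one, hJD, hJDT]
        module
end

section
/- Let h = 2k+1 be odd and let A be the adjacency matrix of a regular tournament of order h with valency k. Let D be the (2h+2)×(2h+2) integer matrix given in block form (with blocks of sizes 1, h, 1, h) by D = [[0, 𝟏ᵀ, 0, 𝟎ᵀ], [𝟎, A, 𝟏, Aᵀ], [0, 𝟎ᵀ, 0, 𝟏ᵀ], [𝟏, Aᵀ, 𝟎, A]], where 𝟎 and 𝟏 denote the h-dimensional all-zeros and all-ones column vectors. Then M(D) is the adjacency matrix of a directed strongly regular graph with parameters (4(h+1), 2h+1, h+1, h, h); that is, M(D)·M(D) = h·J + I (equivalently M(D)² = (h+1)·I + h·M(D) + h·(J − I − M(D))) and M(D)·J = J·M(D) = (2h+1)·J. -/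
open Matrix Kronecker

namespace DSRGAux

lemma ones_mul_ones (β γ δ : Type*) [Fintype β] [Fintype γ] [Fintype δ] :
    (Matrix.of fun _ _ => (1:ℤ) : Matrix β γ ℤ) * (Matrix.of fun _ _ => (1:ℤ) : Matrix γ δ ℤ) =
      (Fintype.card γ : ℤ) • (Matrix.of fun _ _ => (1:ℤ) : Matrix β δ ℤ) := by
  ext i j
  simp [Matrix.mul_apply]

lemma allOnes_sum (β γ : Type*) :
    allOnes (β ⊕ γ) = Matrix.fromBlocks (allOnes β) (Matrix.of fun _ _ => 1)
      (Matrix.of fun _ _ => 1) (allOnes γ) := by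
  ext i j
  rcases i with i | i <;> rcases j with j | j <;> rfl

lemma allOnes_sum_sq (β : Type*) :
    allOnes (β ⊕ β) = Matrix.fromBlocks (allOnes β) (allOnes β) (allOnes β) (allOnes β) := by
  ext i j
  rcases i with i | i <;> rcases j with j | j <;> rfl

lemma allOnes_transpose (β : Type*) : (allOnes β)ᵀ = allOnes β := rfl

/-- The matrix `G = [[0, 1ᵀ], [1, J - I]]`. -/
def Gm (m : ℕ) : Matrix (Fin 1 ⊕ Fin m) (Fin 1 ⊕ Fin m) ℤ :=
  Matrix.fromBlocks 0 (Matrix.of fun _ _ => 1) (Matrix.of fun _ _ => 1)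
    (allOnes (Fin m) - 1)

lemma key_sq (m : ℕ) :
    Gm m * Gm m + Gm m = (m : ℤ) • allOnes (Fin 1 ⊕ Fin m) := by
  rw [Gm, allOnes_sum]
  rw [Matrix.fromBlocks_multiply, Matrix.fromBlocks_add, Matrix.fromBlocks_smul]
  refine Matrix.fromBlocks_inj.mpr ⟨?_, ?_, ?_, ?_⟩ <;>
    simp only [allOnes, Matrix.mul_sub, Matrix.sub_mul, Matrix.mul_one, Matrix.one_mul,
      Matrix.zero_mul, Matrix.mul_zero, ones_mul_ones, Fintype.card_fin, Nat.cast_one,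
      one_smul, zero_add, add_zero] <;>
    abel

lemma key_mulJ (m : ℕ) :
    Gm m * allOnes (Fin 1 ⊕ Fin m) = (m : ℤ) • allOnes (Fin 1 ⊕ Fin m) := by
  rw [Gm, allOnes_sum]
  rw [Matrix.fromBlocks_multiply, Matrix.fromBlocks_smul]
  refine Matrix.fromBlocks_inj.mpr ⟨?_, ?_, ?_, ?_⟩ <;>
    simp only [allOnes, Matrix.mul_sub, Matrix.sub_mul, Matrix.mul_one, Matrix.one_mul,
      Matrix.zero_mul, Matrix.mul_zero, ones_mul_ones, Fintype.card_fin, Nat.cast_one,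
      one_smul, zero_add, add_zero] <;>
    abel

lemma key_Jmul (m : ℕ) :
    allOnes (Fin 1 ⊕ Fin m) * Gm m = (m : ℤ) • allOnes (Fin 1 ⊕ Fin m) := by
  rw [Gm, allOnes_sum]
  rw [Matrix.fromBlocks_multiply, Matrix.fromBlocks_smul]
  refine Matrix.fromBlocks_inj.mpr ⟨?_, ?_, ?_, ?_⟩ <;>
    simp only [allOnes, Matrix.mul_sub, Matrix.sub_mul, Matrix.mul_one, Matrix.one_mul,
      Matrix.zero_mul, Matrix.mul_zero, ones_mul_ones, Fintype.card_fin, Nat.cast_one,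
      one_smul, zero_add, add_zero] <;>
    abel

end DSRGAux

/-- Lemma 6: for a regular tournament `A` of odd order `h = 2k+1`, the
`(2h+2)×(2h+2)` matrix `D = [[0, 𝟏ᵀ, 0, 𝟎ᵀ], [𝟎, A, 𝟏, Aᵀ], [0, 𝟎ᵀ, 0, 𝟏ᵀ],
[𝟏, Aᵀ, 𝟎, A]]` yields `M(D)`, the adjacency matrix of a
DSRG `(4(h+1), 2h+1, h+1, h, h)`. -/
theorem stmt9 (k : ℕ)
    (A : Matrix (Fin (2 * k + 1)) (Fin (2 * k + 1)) ℤ)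
    (hA : IsRegularTournament k A) :
    let h : ℕ := 2 * k + 1
    let E : Matrix (Fin 1 ⊕ Fin (2 * k + 1)) (Fin 1 ⊕ Fin (2 * k + 1)) ℤ :=
      Matrix.fromBlocks 0 (Matrix.of fun _ _ => 1) 0 A
    let F : Matrix (Fin 1 ⊕ Fin (2 * k + 1)) (Fin 1 ⊕ Fin (2 * k + 1)) ℤ :=
      Matrix.fromBlocks 0 0 (Matrix.of fun _ _ => 1) Aᵀ
    let D := Matrix.fromBlocks E F F E
    IsAdjDSRG (MBlock D)
      (4 * ((h : ℤ) + 1)) (2 * (h : ℤ) + 1) ((h : ℤ) + 1) (h : ℤ) (h : ℤ) ∧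
    MBlock D * MBlock D =
      (h : ℤ) • allOnes (((Fin 1 ⊕ Fin (2 * k + 1)) ⊕ (Fin 1 ⊕ Fin (2 * k + 1))) ⊕
        ((Fin 1 ⊕ Fin (2 * k + 1)) ⊕ (Fin 1 ⊕ Fin (2 * k + 1)))) + 1 := by
  intro h E F D
  obtain ⟨hA01, hAdiag, hAsum, -, -⟩ := hA
  unfold h
  have hDdef : D = Matrix.fromBlocks E F F E := rfl
  have hEF : E + F = DSRGAux.Gm (2 * k + 1) := by
    unfold E F
    rw [DSRGAux.Gm, Matrix.fromBlocks_add, hAsum]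
    simp
  have hET : Eᵀ = F := by
    unfold E F
    ext i j
    rcases i with i | i <;> rcases j with j | j <;>
      simp [Matrix.fromBlocks]
  have hFT : Fᵀ = E := by rw [← hET, Matrix.transpose_transpose]
  have hDT : Dᵀ = Matrix.fromBlocks F E E F := by
    rw [hDdef, Matrix.fromBlocks_transpose, hET, hFT]
  have hGG := DSRGAux.key_sq (2 * k + 1)
  have hP : D * D + Dᵀ * D + (D + Dᵀ) = ((2 * k + 1 : ℕ) : ℤ) • allOnes ((Fin 1 ⊕ Fin (2 * k + 1)) ⊕ (Fin 1 ⊕ Fin (2 * k + 1))) := by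
    rw [hDdef, hDT, DSRGAux.allOnes_sum_sq]
    simp only [Matrix.fromBlocks_multiply, Matrix.fromBlocks_add, Matrix.fromBlocks_smul]
    refine Matrix.fromBlocks_inj.mpr ⟨?_, ?_, ?_, ?_⟩ <;>
      · rw [← hGG, ← hEF]; noncomm_ring
  have hQ : D * Dᵀ + Dᵀ * Dᵀ + (D + Dᵀ) = ((2 * k + 1 : ℕ) : ℤ) • allOnes ((Fin 1 ⊕ Fin (2 * k + 1)) ⊕ (Fin 1 ⊕ Fin (2 * k + 1))) := by
    rw [hDdef, hDT, DSRGAux.allOnes_sum_sq]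
    simp only [Matrix.fromBlocks_multiply, Matrix.fromBlocks_add, Matrix.fromBlocks_smul]
    refine Matrix.fromBlocks_inj.mpr ⟨?_, ?_, ?_, ?_⟩ <;>
      · rw [← hGG, ← hEF]; noncomm_ring
  have hKey : MBlock D * MBlock D = ((2 * k + 1 : ℕ) : ℤ) • allOnes (((Fin 1 ⊕ Fin (2 * k + 1)) ⊕ (Fin 1 ⊕ Fin (2 * k + 1))) ⊕ ((Fin 1 ⊕ Fin (2 * k + 1)) ⊕ (Fin 1 ⊕ Fin (2 * k + 1)))) + 1 := by
    rw [MBlock]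
    conv_rhs => rw [DSRGAux.allOnes_sum_sq, Matrix.fromBlocks_smul, ← Matrix.fromBlocks_one,
      Matrix.fromBlocks_add]
    rw [Matrix.fromBlocks_multiply]
    refine Matrix.fromBlocks_inj.mpr ⟨?_, ?_, ?_, ?_⟩
    · rw [← hP]; noncomm_ring
    · rw [add_zero, ← hQ]; noncomm_ring
    · rw [add_zero, ← hP]; noncomm_ring
    · rw [← hQ]; noncomm_ring
  -- degree facts
  have hDJ : D * allOnes ((Fin 1 ⊕ Fin (2 * k + 1)) ⊕ (Fin 1 ⊕ Fin (2 * k + 1))) = ((2 * k + 1 : ℕ) : ℤ) • allOnes ((Fin 1 ⊕ Fin (2 * k + 1)) ⊕ (Fin 1 ⊕ Fin (2 * k + 1))) := by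
    rw [hDdef, DSRGAux.allOnes_sum_sq]
    simp only [Matrix.fromBlocks_multiply, Matrix.fromBlocks_smul]
    refine Matrix.fromBlocks_inj.mpr ⟨?_, ?_, ?_, ?_⟩ <;>
      · rw [← DSRGAux.key_mulJ (2 * k + 1), ← hEF]; noncomm_ring
  have hJD : allOnes ((Fin 1 ⊕ Fin (2 * k + 1)) ⊕ (Fin 1 ⊕ Fin (2 * k + 1))) * D = ((2 * k + 1 : ℕ) : ℤ) • allOnes ((Fin 1 ⊕ Fin (2 * k + 1)) ⊕ (Fin 1 ⊕ Fin (2 * k + 1))) := by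
    rw [hDdef, DSRGAux.allOnes_sum_sq]
    simp only [Matrix.fromBlocks_multiply, Matrix.fromBlocks_smul]
    refine Matrix.fromBlocks_inj.mpr ⟨?_, ?_, ?_, ?_⟩ <;>
      · rw [← DSRGAux.key_Jmul (2 * k + 1), ← hEF]; noncomm_ring
  have hDTJ : Dᵀ * allOnes ((Fin 1 ⊕ Fin (2 * k + 1)) ⊕ (Fin 1 ⊕ Fin (2 * k + 1))) = ((2 * k + 1 : ℕ) : ℤ) • allOnes ((Fin 1 ⊕ Fin (2 * k + 1)) ⊕ (Fin 1 ⊕ Fin (2 * k + 1))) := by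
    have := congrArg Matrix.transpose hJD
    rw [Matrix.transpose_mul, Matrix.transpose_smul, DSRGAux.allOnes_transpose] at this
    exact this
  have hJDT : allOnes ((Fin 1 ⊕ Fin (2 * k + 1)) ⊕ (Fin 1 ⊕ Fin (2 * k + 1))) * Dᵀ = ((2 * k + 1 : ℕ) : ℤ) • allOnes ((Fin 1 ⊕ Fin (2 * k + 1)) ⊕ (Fin 1 ⊕ Fin (2 * k + 1))) := by
    have := congrArg Matrix.transpose hDJ
    rw [Matrix.transpose_mul, Matrix.transpose_smul, DSRGAux.allOnes_transpose] at this
    exact this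
  have hMJ : MBlock D * allOnes (((Fin 1 ⊕ Fin (2 * k + 1)) ⊕ (Fin 1 ⊕ Fin (2 * k + 1))) ⊕ ((Fin 1 ⊕ Fin (2 * k + 1)) ⊕ (Fin 1 ⊕ Fin (2 * k + 1)))) =
      (2 * ((2 * k + 1 : ℕ) : ℤ) + 1) • allOnes (((Fin 1 ⊕ Fin (2 * k + 1)) ⊕ (Fin 1 ⊕ Fin (2 * k + 1))) ⊕ ((Fin 1 ⊕ Fin (2 * k + 1)) ⊕ (Fin 1 ⊕ Fin (2 * k + 1)))) := by
    rw [MBlock, DSRGAux.allOnes_sum_sq ((Fin 1 ⊕ Fin (2 * k + 1)) ⊕ (Fin 1 ⊕ Fin (2 * k + 1)))]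
    simp only [Matrix.fromBlocks_multiply, Matrix.fromBlocks_smul]
    refine Matrix.fromBlocks_inj.mpr ⟨?_, ?_, ?_, ?_⟩ <;>
      · simp only [Matrix.add_mul, Matrix.one_mul, hDJ, hDTJ]
        module
  have hJM : allOnes (((Fin 1 ⊕ Fin (2 * k + 1)) ⊕ (Fin 1 ⊕ Fin (2 * k + 1))) ⊕ ((Fin 1 ⊕ Fin (2 * k + 1)) ⊕ (Fin 1 ⊕ Fin (2 * k + 1)))) * MBlock D =
      (2 * ((2 * k + 1 : ℕ) : ℤ) + 1) • allOnes (((Fin 1 ⊕ Fin (2 * k + 1)) ⊕ (Fin 1 ⊕ Fin (2 * k + 1))) ⊕ ((Fin 1 ⊕ Fin (2 * k + 1)) ⊕ (Fin 1 ⊕ Fin (2 * k + 1)))) := by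
    rw [MBlock, DSRGAux.allOnes_sum_sq ((Fin 1 ⊕ Fin (2 * k + 1)) ⊕ (Fin 1 ⊕ Fin (2 * k + 1)))]
    simp only [Matrix.fromBlocks_multiply, Matrix.fromBlocks_smul]
    refine Matrix.fromBlocks_inj.mpr ⟨?_, ?_, ?_, ?_⟩ <;>
      · simp only [Matrix.mul_add, Matrix.mul_one, hJD, hJDT]
        module
  -- entry and diagonal facts
  have hE01 : ∀ i j, E i j = 0 ∨ E i j = 1 := by
    intro i j
    unfold E
    rcases i with i | i <;> rcases j with j | j <;>
      simp only [Matrix.fromBlocks, Matrix.of_apply, Sum.elim_inl, Sum.elim_inr,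
        Matrix.zero_apply] <;>
      first | exact Or.inl trivial | exact Or.inr trivial | exact Or.inl rfl | exact Or.inr rfl | exact hA01 _ _
  have hF01 : ∀ i j, F i j = 0 ∨ F i j = 1 := by
    intro i j
    unfold F
    rcases i with i | i <;> rcases j with j | j <;>
      simp only [Matrix.fromBlocks, Matrix.of_apply, Sum.elim_inl, Sum.elim_inr,
        Matrix.zero_apply, Matrix.transpose_apply] <;>
      first | exact Or.inl trivial | exact Or.inr trivial | exact Or.inl rfl | exact Or.inr rfl | exact hA01 _ _
  have hD01 : ∀ i j, D i j = 0 ∨ D i j = 1 := by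
    intro i j
    rw [hDdef]
    rcases i with i | i <;> rcases j with j | j <;>
      simp only [Matrix.fromBlocks, Matrix.of_apply, Sum.elim_inl, Sum.elim_inr] <;>
      first | exact hE01 _ _ | exact hF01 _ _
  have hEdiag : ∀ i, E i i = 0 := by
    intro i
    unfold E
    rcases i with i | i <;>
      simp [Matrix.fromBlocks, hAdiag]
  have hDdiag : ∀ i, D i i = 0 := by
    intro i
    rw [hDdef]
    rcases i with i | i <;>
      simp only [Matrix.fromBlocks, Matrix.of_apply, Sum.elim_inl, Sum.elim_inr] <;>
      exact hEdiag _
  refine ⟨⟨?_, ?_, ?_, ?_, hMJ, hJM⟩, hKey⟩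
  · simp only [Fintype.card_sum, Fintype.card_fin]
    push_cast
    ring
  · intro i j
    rcases i with i | i <;> rcases j with j | j <;>
      simp only [MBlock, Matrix.fromBlocks, Matrix.of_apply, Sum.elim_inl, Sum.elim_inr,
        Matrix.add_apply, Matrix.transpose_apply, Matrix.one_apply]
    · exact hD01 i j
    · by_cases hij : i = j
      · subst hij; simp [hDdiag]
      · simpa [hij] using hD01 j i
    · by_cases hij : i = j
      · subst hij; simp [hDdiag]
      · simpa [hij] using hD01 i j
    · exact hD01 j i
  · intro i
    rcases i with i | i <;>
      simp [MBlock, Matrix.fromBlocks, hDdiag]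
  · rw [hKey]
    simp only [smul_sub, smul_add, add_smul, one_smul]
    abel
end

section
/- Let s be a positive integer, let Π be the (2s+2)×(2s+2) permutation matrix of the (2s+2)-cycle, i.e., Π i j = 1 if j ≡ i + 1 (mod 2s+2) and Π i j = 0 otherwise, and let L = Π + Π² + ⋯ + Πˢ. Then M(L) is the adjacency matrix of a directed strongly regular graph with parameters (4(s+1), 2s+1, s+1, s, s); that is, M(L)·M(L) = s·J + I (equivalently M(L)² = (s+1)·I + s·M(L) + s·(J − I − M(L))) and M(L)·J = J·M(L) = (2s+1)·J. -/
open Matrix Kronecker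

namespace Stmt11Aux

variable (s : ℕ)

open Fin.NatCast

def Pm : Matrix (Fin (2*s+2)) (Fin (2*s+2)) ℤ :=
  Matrix.of fun i j => if (j : ℕ) = ((i : ℕ) + 1) % (2 * s + 2) then 1 else 0

def Lm : Matrix (Fin (2*s+2)) (Fin (2*s+2)) ℤ := ∑ i ∈ Finset.Icc 1 s, Pm s ^ i

lemma P_apply (i j : Fin (2*s+2)) :
    Pm s i j = if j = i + 1 then 1 else 0 := by
  haveI : NeZero (2*s+2) := ⟨by omega⟩
  refine if_congr ?_ rfl rfl
  rw [Fin.ext_iff, Fin.val_add, Fin.val_one']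
  have : (1 : ℕ) % (2*s+2) = 1 := Nat.mod_eq_of_lt (by omega)
  rw [this]

lemma Ppow_apply (k : ℕ) (i j : Fin (2*s+2)) :
    (Pm s ^ k) i j = if j = i + (k : Fin (2*s+2)) then 1 else 0 := by
  induction k generalizing i j with
  | zero => simp [Matrix.one_apply, eq_comm]
  | succ k ih =>
      rw [pow_succ, Matrix.mul_apply]
      simp only [ih, P_apply, ite_mul, one_mul, zero_mul]
      rw [Finset.sum_ite_eq' Finset.univ (i + (k : Fin (2*s+2)))
        (fun m => if j = m + 1 then (1:ℤ) else 0)]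
      simp only [Finset.mem_univ, if_true]
      refine if_congr ?_ rfl rfl
      rw [Nat.cast_add, Nat.cast_one, add_assoc]

lemma Ppow_cycle : Pm s ^ (2*s+2) = 1 := by
  haveI : NeZero (2*s+2) := ⟨by omega⟩
  ext i j
  rw [Ppow_apply, Fin.natCast_self]
  simp [Matrix.one_apply, eq_comm]

lemma Ppow_shift (a : ℕ) : Pm s ^ (a + (2*s+2)) = Pm s ^ a := by
  rw [pow_add, Ppow_cycle, mul_one]

lemma Ppow_transpose (k : ℕ) (hk : k ≤ 2*s+2) :
    (Pm s ^ k)ᵀ = Pm s ^ (2*s+2-k) := by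
  haveI : NeZero (2*s+2) := ⟨by omega⟩
  have hcast : ((2*s+2-k : ℕ) : Fin (2*s+2)) = - (k : Fin (2*s+2)) := by
    have h0 : (((2*s+2-k) + k : ℕ) : Fin (2*s+2)) = 0 := by
      rw [show (2*s+2-k) + k = 2*s+2 by omega, Fin.natCast_self]
    rw [Nat.cast_add] at h0
    exact eq_neg_of_add_eq_zero_left h0
  ext i j
  rw [Matrix.transpose_apply, Ppow_apply, Ppow_apply, hcast]
  refine if_congr ?_ rfl rfl
  constructor
  · intro h; rw [h, add_assoc, add_neg_cancel, add_zero]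
  · intro h; rw [h, add_assoc, neg_add_cancel, add_zero]

lemma L_apply (i j : Fin (2*s+2)) :
    Lm s i j = if ((j - i : Fin (2*s+2)) : ℕ) ∈ Finset.Icc 1 s then 1 else 0 := by
  haveI : NeZero (2*s+2) := ⟨by omega⟩
  rw [Lm, Matrix.sum_apply]
  have step : ∀ k ∈ Finset.Icc 1 s,
      (Pm s ^ k) i j = if k = ((j - i : Fin (2*s+2)) : ℕ) then (1:ℤ) else 0 := by
    intro k hk
    rw [Ppow_apply]
    refine if_congr ?_ rfl rfl
    have hk' : k < 2*s+2 := by simp only [Finset.mem_Icc] at hk; omega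
    constructor
    · intro h; rw [h, add_sub_cancel_left, Fin.val_cast_of_lt hk']
    · intro h
      have h2 : ((k : Fin (2*s+2))) = j - i := by rw [h, Fin.cast_val_eq_self]
      rw [h2, add_sub_cancel]
  rw [Finset.sum_congr rfl step,
    Finset.sum_ite_eq' (Finset.Icc 1 s) _ (fun _ => (1:ℤ))]

lemma L_diag (i : Fin (2*s+2)) : Lm s i i = 0 := by
  haveI : NeZero (2*s+2) := ⟨by omega⟩
  rw [L_apply, sub_self]
  simp

lemma L_entry (i j : Fin (2*s+2)) : Lm s i j = 0 ∨ Lm s i j = 1 := by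
  rw [L_apply]; split <;> simp

lemma P_mul_J : Pm s * allOnes (Fin (2*s+2)) = allOnes (Fin (2*s+2)) := by
  ext i j
  rw [Matrix.mul_apply]
  simp only [P_apply, allOnes, Matrix.of_apply, mul_one, ite_mul, one_mul]
  rw [Finset.sum_ite_eq' Finset.univ (i+1) (fun _ => (1:ℤ))]
  simp

lemma J_mul_P : allOnes (Fin (2*s+2)) * Pm s = allOnes (Fin (2*s+2)) := by
  haveI : NeZero (2*s+2) := ⟨by omega⟩
  ext i j
  rw [Matrix.mul_apply]
  simp only [P_apply, allOnes, Matrix.of_apply, one_mul]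
  have step : ∀ m ∈ Finset.univ, (if j = m + 1 then (1:ℤ) else 0)
      = if m = j - 1 then (1:ℤ) else 0 := by
    intro m _
    refine if_congr ?_ rfl rfl
    constructor
    · intro h; rw [h, add_sub_cancel_right]
    · intro h; rw [h, sub_add_cancel]
  rw [Finset.sum_congr rfl step, Finset.sum_ite_eq' Finset.univ (j-1) (fun _ => (1:ℤ))]
  simp

lemma Ppow_mul_J (k : ℕ) : Pm s ^ k * allOnes (Fin (2*s+2)) = allOnes (Fin (2*s+2)) := by
  induction k with
  | zero => simp
  | succ k ih => rw [pow_succ, mul_assoc, P_mul_J, ih]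

lemma J_mul_Ppow (k : ℕ) : allOnes (Fin (2*s+2)) * Pm s ^ k = allOnes (Fin (2*s+2)) := by
  induction k with
  | zero => simp
  | succ k ih => rw [pow_succ, ← mul_assoc, ih, J_mul_P]

lemma L_mul_J : Lm s * allOnes (Fin (2*s+2)) = (s:ℤ) • allOnes (Fin (2*s+2)) := by
  rw [Lm, Finset.sum_mul, Finset.sum_congr rfl (fun k _ => Ppow_mul_J s k),
    Finset.sum_const, Nat.card_Icc]
  simp [Nat.cast_smul_eq_nsmul]

lemma J_mul_L : allOnes (Fin (2*s+2)) * Lm s = (s:ℤ) • allOnes (Fin (2*s+2)) := by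
  rw [Lm, Finset.mul_sum, Finset.sum_congr rfl (fun k _ => J_mul_Ppow s k),
    Finset.sum_const, Nat.card_Icc]
  simp [Nat.cast_smul_eq_nsmul]

lemma geom_sum : ∑ k ∈ Finset.range (2*s+2), Pm s ^ k = allOnes (Fin (2*s+2)) := by
  haveI : NeZero (2*s+2) := ⟨by omega⟩
  ext i j
  rw [Matrix.sum_apply]
  have step : ∀ k ∈ Finset.range (2*s+2),
      (Pm s ^ k) i j = if k = ((j - i : Fin (2*s+2)) : ℕ) then (1:ℤ) else 0 := by
    intro k hk
    rw [Ppow_apply]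
    refine if_congr ?_ rfl rfl
    have hk' : k < 2*s+2 := Finset.mem_range.mp hk
    constructor
    · intro h; rw [h, add_sub_cancel_left, Fin.val_cast_of_lt hk']
    · intro h
      have h2 : ((k : Fin (2*s+2))) = j - i := by rw [h, Fin.cast_val_eq_self]
      rw [h2, add_sub_cancel]
  rw [Finset.sum_congr rfl step,
    Finset.sum_ite_eq' (Finset.range (2*s+2)) _ (fun _ => (1:ℤ))]
  simp [allOnes, Fin.is_lt]

lemma Lt_eq : (Lm s)ᵀ = ∑ i ∈ Finset.Icc (s+2) (2*s+1), Pm s ^ i := by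
  rw [Lm, Matrix.transpose_sum]
  rw [Finset.sum_congr rfl (fun k hk => Ppow_transpose s k
    (by simp only [Finset.mem_Icc] at hk; omega))]
  refine Finset.sum_nbij' (fun a => 2*s+2-a) (fun a => 2*s+2-a) ?_ ?_ ?_ ?_ ?_ <;>
    intro a ha <;> simp only [Finset.mem_Icc] at * <;> first | omega | rfl

lemma decomp : Lm s + (Lm s)ᵀ + 1 + Pm s ^ (s+1) = allOnes (Fin (2*s+2)) := by
  rw [← geom_sum, Lt_eq, Lm]
  rw [Finset.range_eq_Ico,
    ← Finset.sum_Ico_consecutive _ (by omega : (0:ℕ) ≤ s+2) (by omega : s+2 ≤ 2*s+2),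
    ← Finset.sum_Ico_consecutive _ (by omega : (0:ℕ) ≤ s+1) (by omega : s+1 ≤ s+2),
    ← Finset.sum_Ico_consecutive _ (by omega : (0:ℕ) ≤ 1) (by omega : 1 ≤ s+1)]
  have e1 : Finset.Ico 0 1 = {0} := rfl
  have e2 : Finset.Ico 1 (s+1) = Finset.Icc 1 s := Finset.Ico_add_one_right_eq_Icc 1 s
  have e3 : Finset.Ico (s+1) (s+2) = {s+1} := by
    rw [show s+2 = (s+1)+1 from rfl]; exact Nat.Ico_succ_singleton (s+1)
  have e4 : Finset.Ico (s+2) (2*s+2) = Finset.Icc (s+2) (2*s+1) := by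
    rw [show 2*s+2 = (2*s+1)+1 by omega]; exact Finset.Ico_add_one_right_eq_Icc _ _
  rw [e1, e2, e3, e4, Finset.sum_singleton, Finset.sum_singleton, pow_zero]
  abel

lemma J_transpose : (allOnes (Fin (2*s+2)))ᵀ = allOnes (Fin (2*s+2)) := rfl

lemma Lt_mul_J : (Lm s)ᵀ * allOnes (Fin (2*s+2)) = (s:ℤ) • allOnes (Fin (2*s+2)) := by
  have := congrArg Matrix.transpose (J_mul_L s)
  rwa [Matrix.transpose_mul, J_transpose, Matrix.transpose_smul, J_transpose] at this

lemma J_mul_Lt : allOnes (Fin (2*s+2)) * (Lm s)ᵀ = (s:ℤ) • allOnes (Fin (2*s+2)) := by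
  have := congrArg Matrix.transpose (L_mul_J s)
  rwa [Matrix.transpose_mul, J_transpose, Matrix.transpose_smul, J_transpose] at this

lemma L_mul_Q : Lm s * Pm s ^ (s+1) = (Lm s)ᵀ := by
  rw [Lt_eq, Lm, Finset.sum_mul]
  refine Finset.sum_nbij' (fun a => a + (s+1)) (fun a => a - (s+1)) ?_ ?_ ?_ ?_ ?_
  · intro a ha; simp only [Finset.mem_Icc] at *; omega
  · intro a ha; simp only [Finset.mem_Icc] at *; omega
  · intro a ha; omega
  · intro a ha; simp only [Finset.mem_Icc] at ha; omega
  · intro a ha; rw [← pow_add]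

lemma Lt_mul_Q : (Lm s)ᵀ * Pm s ^ (s+1) = Lm s := by
  rw [Lt_eq, Finset.sum_mul, Lm]
  refine Finset.sum_nbij' (fun a => a - (s+1)) (fun a => a + (s+1)) ?_ ?_ ?_ ?_ ?_
  · intro a ha; simp only [Finset.mem_Icc] at *; omega
  · intro a ha; simp only [Finset.mem_Icc] at *; omega
  · intro a ha; simp only [Finset.mem_Icc] at ha; omega
  · intro a ha; omega
  · intro a ha
    simp only [Finset.mem_Icc] at ha
    rw [← pow_add, show a + (s+1) = (a - (s+1)) + (2*s+2) by omega, Ppow_shift]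

lemma Q_comm_L : Pm s ^ (s+1) * Lm s = Lm s * Pm s ^ (s+1) := by
  rw [Lm, Finset.mul_sum, Finset.sum_mul]
  exact Finset.sum_congr rfl fun k _ => (pow_mul_comm (Pm s) (s+1) k)

lemma L_comm_Lt : Lm s * (Lm s)ᵀ = (Lm s)ᵀ * Lm s := by
  rw [← L_mul_Q, mul_assoc, ← Q_comm_L, ← mul_assoc]

lemma hA : Lm s * Lm s + Lm s * (Lm s)ᵀ + Lm s + (Lm s)ᵀ
    = (s:ℤ) • allOnes (Fin (2*s+2)) := by
  have := congrArg (fun X => Lm s * X) (decomp s)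
  simp only [mul_add, mul_one] at this
  rw [L_mul_J, L_mul_Q] at this
  exact this

lemma hB : (Lm s)ᵀ * Lm s + (Lm s)ᵀ * (Lm s)ᵀ + (Lm s)ᵀ + Lm s
    = (s:ℤ) • allOnes (Fin (2*s+2)) := by
  have := congrArg (fun X => (Lm s)ᵀ * X) (decomp s)
  simp only [mul_add, mul_one] at this
  rw [Lt_mul_J, Lt_mul_Q] at this
  exact this

lemma allOnes_sum_eq :
    allOnes (Fin (2*s+2) ⊕ Fin (2*s+2)) =
      Matrix.fromBlocks (allOnes (Fin (2*s+2))) (allOnes (Fin (2*s+2)))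
        (allOnes (Fin (2*s+2))) (allOnes (Fin (2*s+2))) := by
  ext (i|i) (j|j) <;> rfl

lemma Msq : MBlock (Lm s) * MBlock (Lm s) =
    (s:ℤ) • allOnes (Fin (2*s+2) ⊕ Fin (2*s+2)) + 1 := by
  have hA' := hA s
  have hB' := hB s
  have hc := L_comm_Lt s
  rw [MBlock, Matrix.fromBlocks_multiply]
  conv_rhs => rw [allOnes_sum_eq, Matrix.fromBlocks_smul, ← Matrix.fromBlocks_one,
    Matrix.fromBlocks_add]
  rw [Matrix.fromBlocks_inj]
  refine ⟨?_, ?_, ?_, ?_⟩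
  · rw [← hA', hc]; simp only [mul_add, add_mul, mul_one, one_mul]; abel
  · rw [← hB', ← hc, add_zero]; simp only [mul_add, add_mul, mul_one, one_mul]; abel
  · rw [← hA', hc, add_zero]; simp only [mul_add, add_mul, mul_one, one_mul]; abel
  · rw [← hB', ← hc]; simp only [mul_add, add_mul, mul_one, one_mul]; abel

lemma MJ : MBlock (Lm s) * allOnes (Fin (2*s+2) ⊕ Fin (2*s+2)) =
    (2*(s:ℤ)+1) • allOnes (Fin (2*s+2) ⊕ Fin (2*s+2)) := by
  rw [MBlock, allOnes_sum_eq, Matrix.fromBlocks_multiply, Matrix.fromBlocks_smul,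
    Matrix.fromBlocks_inj]
  refine ⟨?_, ?_, ?_, ?_⟩ <;>
    simp only [add_mul, one_mul, L_mul_J, Lt_mul_J] <;> module

lemma JM : allOnes (Fin (2*s+2) ⊕ Fin (2*s+2)) * MBlock (Lm s) =
    (2*(s:ℤ)+1) • allOnes (Fin (2*s+2) ⊕ Fin (2*s+2)) := by
  rw [MBlock, allOnes_sum_eq, Matrix.fromBlocks_multiply, Matrix.fromBlocks_smul,
    Matrix.fromBlocks_inj]
  refine ⟨?_, ?_, ?_, ?_⟩ <;>
    simp only [mul_add, mul_one, J_mul_L, J_mul_Lt] <;> module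

theorem key (s : ℕ) (hs : 0 < s) :
    IsAdjDSRG (MBlock (Lm s))
      (4 * ((s : ℤ) + 1)) (2 * (s : ℤ) + 1) ((s : ℤ) + 1) (s : ℤ) (s : ℤ) ∧
    MBlock (Lm s) * MBlock (Lm s) =
      (s : ℤ) • allOnes (Fin (2*s+2) ⊕ Fin (2*s+2)) + 1 := by
  refine ⟨⟨?_, ?_, ?_, ?_, ?_, ?_⟩, Msq s⟩
  · simp only [Fintype.card_sum, Fintype.card_fin]
    push_cast; ring
  · rintro (i|i) (j|j)
    · exact L_entry s i j
    · show ((Lm s)ᵀ + 1) i j = 0 ∨ ((Lm s)ᵀ + 1) i j = 1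
      by_cases h : i = j
      · subst h
        right
        simp [Matrix.add_apply, Matrix.one_apply, Matrix.transpose_apply, L_diag]
      · simpa [Matrix.add_apply, Matrix.one_apply, Matrix.transpose_apply, h]
          using L_entry s j i
    · show (Lm s + 1) i j = 0 ∨ (Lm s + 1) i j = 1
      by_cases h : i = j
      · subst h
        right
        simp [Matrix.add_apply, Matrix.one_apply, L_diag]
      · simpa [Matrix.add_apply, Matrix.one_apply, h] using L_entry s i j
    · exact L_entry s j i
  · rintro (i|i)
    · exact L_diag s i
    · exact L_diag s i
  · rw [Msq]
    module
  · rw [MJ]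
  · rw [JM]

end Stmt11Aux

/-- Lemma 7: with `Π` the permutation matrix of the `(2s+2)`-cycle and
`L = Π + Π² + ⋯ + Πˢ`, the matrix `M(L)` is the adjacency matrix of a
DSRG `(4(s+1), 2s+1, s+1, s, s)`. -/
theorem stmt11 (s : ℕ) (hs : 0 < s) :
    let P : Matrix (Fin (2 * s + 2)) (Fin (2 * s + 2)) ℤ :=
      Matrix.of fun i j => if (j : ℕ) = ((i : ℕ) + 1) % (2 * s + 2) then 1 else 0
    let L := ∑ i ∈ Finset.Icc 1 s, P ^ i
    IsAdjDSRG (MBlock L)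
      (4 * ((s : ℤ) + 1)) (2 * (s : ℤ) + 1) ((s : ℤ) + 1) (s : ℤ) (s : ℤ) ∧
    MBlock L * MBlock L =
      (s : ℤ) • allOnes (Fin (2 * s + 2) ⊕ Fin (2 * s + 2)) + 1 := by
  intro P L
  exact Stmt11Aux.key s hs
end

section
/- Let A and B be n×n integer matrices and let P be an n×n permutation matrix (the permutation matrix of some permutation σ of Fin n) with P·A·Pᵀ = B. Then the block permutation matrix Q = [[P, 0], [0, P]] (Matrix.fromBlocks P 0 0 P) satisfies Q·M(A)·Qᵀ = M(B); in particular, isomorphic tournaments yield isomorphic graphs under the construction M(·). -/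
open Matrix Kronecker

/-- Isomorphic tournaments yield isomorphic graphs under the construction
`M(·)`: if `P·A·Pᵀ = B` for a permutation matrix `P`, then
`Q = [[P, 0], [0, P]]` satisfies `Q·M(A)·Qᵀ = M(B)`. -/
theorem stmt15 (n : ℕ) (A B : Matrix (Fin n) (Fin n) ℤ) (σ : Equiv.Perm (Fin n))
    (h : σ.permMatrix ℤ * A * (σ.permMatrix ℤ)ᵀ = B) :
    Matrix.fromBlocks (σ.permMatrix ℤ) 0 0 (σ.permMatrix ℤ) *
        MBlock A *
        (Matrix.fromBlocks (σ.permMatrix ℤ) 0 0 (σ.permMatrix ℤ))ᵀ =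
      MBlock B := by
  have hP : σ.permMatrix ℤ * (σ.permMatrix ℤ)ᵀ = 1 := by
    rw [← PEquiv.toMatrix_symm, ← PEquiv.toMatrix_trans, ← Equiv.toPEquiv_symm,
      ← Equiv.toPEquiv_trans]
    simp
  have hBt : σ.permMatrix ℤ * Aᵀ * (σ.permMatrix ℤ)ᵀ = Bᵀ := by
    rw [← h]; simp [Matrix.mul_assoc]
  simp only [MBlock, Matrix.fromBlocks_transpose, Matrix.fromBlocks_multiply,
    Matrix.mul_add, Matrix.add_mul, Matrix.mul_one, Matrix.one_mul,
    Matrix.mul_zero, Matrix.zero_mul, add_zero, zero_add,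
    transpose_zero]
  rw [show σ.permMatrix ℤ * A * (σ.permMatrix ℤ)ᵀ = B from h,
    show σ.permMatrix ℤ * Aᵀ * (σ.permMatrix ℤ)ᵀ = Bᵀ from hBt, hP]
end

section
/- Let A be an n×n integer matrix and let P be an n×n permutation matrix such that P·A = Aᵀ and A·P = Aᵀ. Then the block permutation matrix Q = [[I, 0], [0, P]] (Matrix.fromBlocks I 0 0 P) satisfies Q·(Matrix.fromBlocks A Aᵀ A Aᵀ)·Qᵀ = Matrix.fromBlocks A A Aᵀ Aᵀ; in particular, the two directed strongly regular graphs B = [[A, Aᵀ], [A, Aᵀ]] and C = [[A, A], [Aᵀ, Aᵀ]] constructed from A are isomorphic. -/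
open Matrix Kronecker

/-- Lemma 8: if a permutation matrix `P` satisfies `P·A = Aᵀ = A·P`, then
`Q = [[I, 0], [0, P]]` satisfies
`Q·[[A, Aᵀ], [A, Aᵀ]]·Qᵀ = [[A, A], [Aᵀ, Aᵀ]]`, so the two DSRGs of Lemma 2
constructed from `A` are isomorphic. -/
theorem stmt16 (n : ℕ) (A : Matrix (Fin n) (Fin n) ℤ) (σ : Equiv.Perm (Fin n))
    (h1 : σ.permMatrix ℤ * A = Aᵀ) (h2 : A * σ.permMatrix ℤ = Aᵀ) :
    Matrix.fromBlocks (1 : Matrix (Fin n) (Fin n) ℤ) 0 0 (σ.permMatrix ℤ) *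
        Matrix.fromBlocks A Aᵀ A Aᵀ *
        (Matrix.fromBlocks (1 : Matrix (Fin n) (Fin n) ℤ) 0 0 (σ.permMatrix ℤ))ᵀ =
      Matrix.fromBlocks A A Aᵀ Aᵀ := by
  have hAP : Aᵀ * (σ.permMatrix ℤ)ᵀ = A := by
    rw [← Matrix.transpose_mul, h1, Matrix.transpose_transpose]
  simp only [Matrix.fromBlocks_transpose, Matrix.fromBlocks_multiply,
    Matrix.transpose_zero, Matrix.transpose_one, Matrix.one_mul, Matrix.mul_one,
    Matrix.zero_mul, Matrix.mul_zero, add_zero, zero_add, h1, hAP]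
  rw [Matrix.mul_assoc, hAP, h1]
end

section
/- Let A be an n×n integer matrix, let P be an n×n permutation matrix such that P·A = Aᵀ and A·P = Aᵀ, and let w be a positive integer. Let B = J_w ⊗ (Matrix.fromBlocks A Aᵀ A Aᵀ) and C = J_w ⊗ (Matrix.fromBlocks A A Aᵀ Aᵀ), where J_w is the w×w all-ones matrix and ⊗ the Kronecker product. Then the block permutation matrix H = I_w ⊗ (Matrix.fromBlocks I 0 0 P) satisfies H·B·Hᵀ = C; in particular, B and C are isomorphic. -/
open Matrix Kronecker

/-- Lemma 9: if a permutation matrix `P` satisfies `P·A = Aᵀ = A·P`, then with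
`B = J_w ⊗ [[A, Aᵀ], [A, Aᵀ]]`, `C = J_w ⊗ [[A, A], [Aᵀ, Aᵀ]]` and
`H = I_w ⊗ [[I, 0], [0, P]]`, one has `H·B·Hᵀ = C`, so `B` and `C` are
isomorphic. -/
theorem stmt17 (n w : ℕ) (hw : 0 < w)
    (A : Matrix (Fin n) (Fin n) ℤ) (σ : Equiv.Perm (Fin n))
    (h1 : σ.permMatrix ℤ * A = Aᵀ) (h2 : A * σ.permMatrix ℤ = Aᵀ) :
    let H := (1 : Matrix (Fin w) (Fin w) ℤ) ⊗ₖ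
      Matrix.fromBlocks (1 : Matrix (Fin n) (Fin n) ℤ) 0 0 (σ.permMatrix ℤ)
    let B := allOnes (Fin w) ⊗ₖ Matrix.fromBlocks A Aᵀ A Aᵀ
    let C := allOnes (Fin w) ⊗ₖ Matrix.fromBlocks A A Aᵀ Aᵀ
    H * B * Hᵀ = C := by
  intro H B C
  have h3 : Aᵀ * (σ.permMatrix ℤ)ᵀ = A := by
    rw [← Matrix.transpose_mul, h1, Matrix.transpose_transpose]
  have hP : σ.permMatrix ℤ * Aᵀ * (σ.permMatrix ℤ)ᵀ = Aᵀ := by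
    rw [Matrix.mul_assoc, h3, h1]
  show H * B * Hᵀ = C
  simp only [H, B, C, ← Matrix.kroneckerMap_transpose]
  rw [← Matrix.mul_kronecker_mul, ← Matrix.mul_kronecker_mul]
  simp [Matrix.fromBlocks_transpose, Matrix.fromBlocks_multiply, h1, h3, hP, -Matrix.transpose_permMatrix]
end
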